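/- Let A be a finite-dimensional algebra and M a nonzero finite-dimensional A-module with local endomorphism ring. Let P• be the two-term complex P^{-1} → P^0 (in degrees 0 and 1) given by a minimal projective presentation of M. Then P• is an indecomposable complex, and H^1(P•) ≅ M. -/

import Mathlib

open CategoryTheory

/-- The radical of a module `M` over `A`: the submodule `rad(A)·M`. -/
def modRad (A M : Type*) [Ring A] [AddCommGroup M] [Module A M] : Submodule A M :=
  Submodule.span A {y | ∃ a ∈ Ideal.jacobson (⊥ : Ideal A), ∃ x : M, a • x = y}

/-- The dimension of an `A`-module over the base field `k`. -/
noncomputable def kdim (k : Type*) [Field k] (A : Type*) [Ring A] [Algebra k A]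
    (M : Type*) [AddCommGroup M] [Module A M] : ℕ :=
  Module.finrank k (RestrictScalars k A M)

/-- The endomorphism ring of a two-term complex `d : P1 → P0` (in degrees `0` and
`1`): pairs of endomorphisms commuting with the differential. -/
def cplxEnd {A P1 P0 : Type*} [Ring A] [AddCommGroup P1] [Module A P1]
    [AddCommGroup P0] [Module A P0] (d : P1 →ₗ[A] P0) :
    Subring (Module.End A P1 × Module.End A P0) where
  carrier := {fg | ∀ x : P1, d (fg.1 x) = fg.2 (d x)}
  one_mem' := by intro x; simp [Module.End.one_apply]
  mul_mem' := by
    intro f g hf hg x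
    simp only [Prod.fst_mul, Prod.snd_mul, Module.End.mul_apply]
    rw [hf, hg]
  add_mem' := by
    intro f g hf hg x
    simp only [Prod.fst_add, Prod.snd_add, LinearMap.add_apply, map_add]
    rw [hf, hg]
  zero_mem' := by intro x; simp
  neg_mem' := by
    intro f hf x
    simp only [Prod.fst_neg, Prod.snd_neg, LinearMap.neg_apply, map_neg]
    rw [hf]

section Helpers

variable {A : Type*} [Ring A] {P : Type*} [AddCommGroup P] [Module A P]

lemma jac_smul_mem_coatom {N : Submodule A P} (hN : IsCoatom N)
    {a : A} (ha : a ∈ Ideal.jacobson (⊥ : Ideal A)) (x : P) : a • x ∈ N := by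
  by_cases hx : x ∈ N
  · exact N.smul_mem a hx
  · set φ := LinearMap.toSpanSingleton A P x with hφ
    set I : Ideal A := Submodule.comap φ N with hI
    have hφa : ∀ b : A, φ b = b • x := fun b => rfl
    have hImax : I.IsMaximal := by
      constructor
      constructor
      · intro h
        have h1 : (1 : A) ∈ I := h ▸ Submodule.mem_top
        rw [hI, Submodule.mem_comap, hφa, one_smul] at h1
        exact hx h1
      · intro J hJ
        obtain ⟨b, hbJ, hbI⟩ := SetLike.exists_of_lt hJ
        have hbx : (b • x : P) ∉ N := fun h => hbI (Submodule.mem_comap.2 h)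
        have htop : N ⊔ Submodule.span A {b • x} = ⊤ := by
          refine hN.2 _ (left_lt_sup.2 fun hle => hbx ?_)
          exact hle (Submodule.mem_span_singleton_self _)
        have hxmem : x ∈ N ⊔ Submodule.span A {b • x} := htop ▸ Submodule.mem_top
        obtain ⟨n, hn, y, hy, hxy⟩ := Submodule.mem_sup.1 hxmem
        obtain ⟨c, rfl⟩ := Submodule.mem_span_singleton.1 hy
        have hc : (c * b) • x = x - n := by
          rw [mul_smul, eq_sub_iff_add_eq, add_comm]; exact hxy
        have key : (1 - c * b) • x = n := by
          rw [sub_smul, one_smul, hc]; abel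
        have h1 : (1 - c * b) ∈ I := Submodule.mem_comap.2 (by rw [hφa, key]; exact hn)
        have h2 : c * b ∈ J := by
          have := J.smul_mem c hbJ
          simpa [smul_eq_mul] using this
        have : (1 : A) ∈ J := by
          have := J.add_mem (hJ.le h1) h2
          simpa using this
        exact (Ideal.eq_top_iff_one J).2 this
    have haI : a ∈ I := by
      rw [Ideal.jacobson] at ha
      exact Submodule.mem_sInf.1 ha I ⟨bot_le, hImax⟩
    exact Submodule.mem_comap.1 haI

lemma modRad_le_coatom {N : Submodule A P} (hN : IsCoatom N) : modRad A P ≤ N := by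
  rw [modRad, Submodule.span_le]
  rintro y ⟨a, ha, x, rfl⟩
  exact jac_smul_mem_coatom hN ha x

lemma nakayama [Module.Finite A P] {N : Submodule A P}
    (h : N ⊔ modRad A P = ⊤) : N = ⊤ := by
  have hco : IsCoatomic (Submodule A P) :=
    CompleteLattice.coatomic_of_top_compact
      ((Submodule.fg_iff_compact _).1 (Module.finite_def.mp inferInstance))
  rcases eq_top_or_exists_le_coatom N with h' | ⟨N', hN', hle⟩
  · exact h'
  · exfalso
    have : (⊤ : Submodule A P) ≤ N' := by
      rw [← h]
      exact sup_le hle (modRad_le_coatom hN')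
    exact hN'.1 (top_le_iff.1 this)

end Helpers

/-- Let `M` be a nonzero finite-dimensional module with local endomorphism ring over a
finite-dimensional algebra `A`, and let `P• : P1 → P0` (degrees `0`,`1`) be the
two-term complex given by a minimal projective presentation of `M`.  Then `P•` is an
indecomposable complex (its endomorphism ring is local) and `H¹(P•) ≅ M`. -/
theorem stmt_14 (k : Type*) [Field k] (A : Type*) [Ring A] [Algebra k A]
    [FiniteDimensional k A]
    (M : Type*) [AddCommGroup M] [Module A M] [Module.Finite A M]
    [Nontrivial M] (hM : IsLocalRing (Module.End A M))
    (P0 : Type*) [AddCommGroup P0] [Module A P0] [Module.Finite A P0]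
    [Module.Projective A P0]
    (P1 : Type*) [AddCommGroup P1] [Module A P1] [Module.Finite A P1]
    [Module.Projective A P1]
    (p : P0 →ₗ[A] M) (hp : Function.Surjective p)
    (hpcover : LinearMap.ker p ≤ modRad A P0)
    (d : P1 →ₗ[A] P0) (hd : LinearMap.range d = LinearMap.ker p)
    (hdcover : LinearMap.ker d ≤ modRad A P1) :
    IsLocalRing (cplxEnd d) ∧
      Nonempty ((P0 ⧸ LinearMap.range d) ≃ₗ[A] M) := by
  -- set up scalar structures over k
  letI : Module k P0 := Module.compHom P0 (algebraMap k A)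
  letI : IsScalarTower k A P0 :=
    ⟨fun c a x => by
      show (c • a) • x = algebraMap k A c • (a • x)
      rw [Algebra.smul_def, mul_smul]⟩
  letI : Module k P1 := Module.compHom P1 (algebraMap k A)
  letI : IsScalarTower k A P1 :=
    ⟨fun c a x => by
      show (c • a) • x = algebraMap k A c • (a • x)
      rw [Algebra.smul_def, mul_smul]⟩
  haveI : Module.Finite k P0 := Module.Finite.trans A P0
  haveI : Module.Finite k P1 := Module.Finite.trans A P1
  haveI : IsNoetherian A P0 := isNoetherian_of_tower k inferInstance
  haveI : IsNoetherian A P1 := isNoetherian_of_tower k inferInstance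
  haveI : IsArtinian A P0 := isArtinian_of_tower k inferInstance
  -- the isomorphism H¹(P•) ≅ M
  have e : (P0 ⧸ LinearMap.range d) ≃ₗ[A] M :=
    (Submodule.quotEquivOfEq _ _ hd).trans (p.quotKerEquivOfSurjective hp)
  refine ⟨?_, ⟨e⟩⟩
  -- nontriviality of the endomorphism ring
  haveI : Nontrivial P0 := by
    obtain ⟨m, m', hmm⟩ := exists_pair_ne M
    obtain ⟨x, rfl⟩ := hp m
    obtain ⟨y, rfl⟩ := hp m'
    exact ⟨x, y, fun h => hmm (by rw [h])⟩
  haveI : Nontrivial (cplxEnd d) := by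
    refine ⟨0, 1, fun h => ?_⟩
    have h2 : ((0 : cplxEnd d) : Module.End A P1 × Module.End A P0).2 =
        ((1 : cplxEnd d) : Module.End A P1 × Module.End A P0).2 := by rw [h]
    obtain ⟨x, hx⟩ := exists_ne (0 : P0)
    exact hx (by simpa using (LinearMap.congr_fun h2 x).symm)
  -- key step: an endomorphism of the complex inducing a bijection on M is a unit
  have key : ∀ b : cplxEnd d, ∀ F : Module.End A M,
      (∀ x : P0, F (p x) = p ((b : Module.End A P1 × Module.End A P0).2 x)) →
      Function.Bijective F → IsUnit b := by
    rintro ⟨⟨f1, f0⟩, hcomm⟩ F hF hFbij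
    simp only at hcomm hF
    -- f0 is surjective
    have hf0ker : ∀ x ∈ LinearMap.ker p, f0 x ∈ LinearMap.ker p := by
      intro x hx
      rw [← hd] at hx
      obtain ⟨y, rfl⟩ := hx
      rw [← hcomm, ← hd]
      exact ⟨f1 y, rfl⟩
    have hf0surj : Function.Surjective f0 := by
      have htop : LinearMap.range f0 ⊔ modRad A P0 = ⊤ := by
        rw [eq_top_iff]
        intro y _
        obtain ⟨m, hm⟩ := hFbij.2 (p y)
        obtain ⟨x, rfl⟩ := hp m
        rw [hF] at hm
        have : y - f0 x ∈ LinearMap.ker p := by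
          rw [LinearMap.mem_ker, map_sub, hm, sub_self]
        refine Submodule.mem_sup.2 ⟨f0 x, ⟨x, rfl⟩, y - f0 x, hpcover this, by abel⟩
      have := nakayama htop
      rwa [LinearMap.range_eq_top] at this
    have hf0inj : Function.Injective f0 :=
      IsNoetherian.injective_of_surjective_endomorphism f0 hf0surj
    -- f0 restricts to a bijection of ker p
    have hf0kersurj : ∀ y ∈ LinearMap.ker p, ∃ z ∈ LinearMap.ker p, f0 z = y := by
      set f0' : LinearMap.ker p →ₗ[A] LinearMap.ker p := f0.restrict hf0ker with hf0'
      have hinj : Function.Injective f0' := by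
        intro u v huv
        have : f0 u.1 = f0 v.1 := congrArg Subtype.val huv
        exact Subtype.ext (hf0inj this)
      have hsurj : Function.Surjective f0' :=
        IsArtinian.surjective_of_injective_endomorphism f0' hinj
      intro y hy
      obtain ⟨z, hz⟩ := hsurj ⟨y, hy⟩
      exact ⟨z.1, z.2, congrArg Subtype.val hz⟩
    -- f1 is surjective
    have hf1surj : Function.Surjective f1 := by
      have htop : LinearMap.range f1 ⊔ modRad A P1 = ⊤ := by
        rw [eq_top_iff]
        intro x _
        have hdx : d x ∈ LinearMap.ker p := hd ▸ ⟨x, rfl⟩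
        obtain ⟨z, hz, hzf⟩ := hf0kersurj (d x) hdx
        rw [← hd] at hz
        obtain ⟨w, rfl⟩ := hz
        rw [← hcomm] at hzf
        have : x - f1 w ∈ LinearMap.ker d := by
          rw [LinearMap.mem_ker, map_sub, hzf, sub_self]
        refine Submodule.mem_sup.2 ⟨f1 w, ⟨w, rfl⟩, x - f1 w, hdcover this, by abel⟩
      have := nakayama htop
      rwa [LinearMap.range_eq_top] at this
    have hf1inj : Function.Injective f1 :=
      IsNoetherian.injective_of_surjective_endomorphism f1 hf1surj
    -- build the inverse
    set E1 := LinearEquiv.ofBijective f1 ⟨hf1inj, hf1surj⟩ with hE1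
    set E0 := LinearEquiv.ofBijective f0 ⟨hf0inj, hf0surj⟩ with hE0
    have hE1a : ∀ x, E1 x = f1 x := fun _ => rfl
    have hE0a : ∀ x, E0 x = f0 x := fun _ => rfl
    have hmem : ((E1.symm : P1 →ₗ[A] P1), (E0.symm : P0 →ₗ[A] P0)) ∈ cplxEnd d := by
      intro x
      apply hf0inj
      show f0 (d (E1.symm x)) = f0 (E0.symm (d x))
      rw [← hcomm]
      have h1 : f1 (E1.symm x) = x := E1.apply_symm_apply x
      have h2 : f0 (E0.symm (d x)) = d x := E0.apply_symm_apply (d x)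
      rw [h1, h2]
    refine isUnit_iff_exists.2 ⟨⟨_, hmem⟩, ?_, ?_⟩ <;>
    · apply Subtype.ext
      apply Prod.ext <;>
      · apply LinearMap.ext
        intro x
        simp only [Subring.coe_mul, Prod.fst_mul, Prod.snd_mul, Module.End.mul_apply,
          OneMemClass.coe_one, Prod.fst_one, Prod.snd_one, Module.End.one_apply]
        first
        | exact E1.apply_symm_apply x
        | exact E0.apply_symm_apply x
        | exact E1.symm_apply_apply x
        | exact E0.symm_apply_apply x
  -- now prove locality
  refine ⟨fun {b c} hbc => ?_⟩
  have hc : c = 1 - b := by rw [eq_sub_iff_add_eq, add_comm]; exact hbc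
  subst hc
  obtain ⟨⟨f1, f0⟩, hcomm⟩ := b
  have hcomm : ∀ x : P1, d (f1 x) = f0 (d x) := hcomm
  -- the induced endomorphism on M
  have hker : LinearMap.ker p ≤ LinearMap.ker (p ∘ₗ f0) := by
    intro x hx
    rw [← hd] at hx
    obtain ⟨y, rfl⟩ := hx
    have : p (f0 (d y)) = 0 := by
      rw [← hcomm]
      have : d (f1 y) ∈ LinearMap.ker p := hd ▸ ⟨f1 y, rfl⟩
      exact this
    simpa using this
  set q : (P0 ⧸ LinearMap.ker p) →ₗ[A] M := Submodule.liftQ _ (p ∘ₗ f0) hker with hq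
  set ep := p.quotKerEquivOfSurjective hp with hep
  have hepmk : ∀ x : P0, ep (Submodule.Quotient.mk x) = p x := fun x => rfl
  set F : Module.End A M := q ∘ₗ (ep.symm : M →ₗ[A] P0 ⧸ LinearMap.ker p) with hFdef
  have hF : ∀ x : P0, F (p x) = p (f0 x) := by
    intro x
    have h1 : ep.symm (p x) = Submodule.Quotient.mk x := by
      apply ep.injective; rw [LinearEquiv.apply_symm_apply, hepmk]
    show q (ep.symm (p x)) = p (f0 x)
    rw [h1]
    exact Submodule.liftQ_apply _ _ _
  rcases hM.isUnit_or_isUnit_of_add_one (a := F) (b := 1 - F) (by abel) with h | h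
  · exact Or.inl (key ⟨(f1, f0), hcomm⟩ F hF ((Module.End.isUnit_iff F).1 h))
  · refine Or.inr (key _ (1 - F) ?_ ((Module.End.isUnit_iff (1 - F)).1 h))
    intro x
    show (1 - F) (p x) = p ((1 - f0) x)
    rw [LinearMap.sub_apply, LinearMap.sub_apply, Module.End.one_apply,
      Module.End.one_apply, map_sub, hF x]
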